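/- Let (Ω, μ) be a probability space and let R, Z, W, T be random variables on Ω, each taking values in a finite (or countable, finitely supported) set, with T real-valued. Let f be a function from the range of R to ℝ and define the random variable G = f(R) + T. Then the conditional Shannon entropy of G given the pair (W, Z) satisfies H(G ∣ W, Z) ≤ H(R) − I(Z ; R) + H(T ∣ W, Z), where H denotes Shannon entropy, H(· ∣ ·) conditional Shannon entropy, and I(· ; ·) mutual information. -/
import Mathlib


open MeasureTheory ProbabilityTheory

/-- Shannon entropy of a discrete random variable:
`H(X) = −∑_x P(X = x) log P(X = x)`. -/
noncomputable def entropy {Ω S : Type*} [MeasurableSpace Ω] (μ : Measure Ω) (X : Ω → S) : ℝ :=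
  ∑' s : S, Real.negMulLog ((μ (X ⁻¹' {s})).toReal)

/-- Conditional Shannon entropy: `H(X ∣ Y) = ∑_y P(Y = y) H(X ∣ Y = y)`. -/
noncomputable def condEntropy {Ω S T : Type*} [MeasurableSpace Ω] (μ : Measure Ω)
    (X : Ω → S) (Y : Ω → T) : ℝ :=
  ∑' t : T, ((μ (Y ⁻¹' {t})).toReal) * entropy (μ[|Y ⁻¹' {t}]) X

/-- Mutual information: `I(X ; Y) = H(X) − H(X ∣ Y)`. -/
noncomputable def mutualInfo {Ω S T : Type*} [MeasurableSpace Ω] (μ : Measure Ω)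
    (X : Ω → S) (Y : Ω → T) : ℝ :=
  entropy μ X - condEntropy μ X Y

section AuxEntropyLemmas

variable {Ω : Type*} [MeasurableSpace Ω]

/-- Subadditivity of `negMulLog` over finite sums of nonnegative reals. -/
lemma negMulLog_sum_le' {ι : Type*} (F : Finset ι) (p : ι → ℝ) (hp : ∀ i ∈ F, 0 ≤ p i) :
    Real.negMulLog (∑ i ∈ F, p i) ≤ ∑ i ∈ F, Real.negMulLog (p i) := by
  have h1 : Real.negMulLog (∑ i ∈ F, p i)
      = ∑ i ∈ F, -(p i * Real.log (∑ j ∈ F, p j)) := by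
    rw [Real.negMulLog, neg_mul, Finset.sum_mul, ← Finset.sum_neg_distrib]
  rw [h1]
  refine Finset.sum_le_sum fun i hi => ?_
  rcases eq_or_lt_of_le (hp i hi) with h0 | h0
  · simp [← h0]
  · have hle : p i ≤ ∑ j ∈ F, p j := Finset.single_le_sum hp hi
    have : Real.log (p i) ≤ Real.log (∑ j ∈ F, p j) := Real.log_le_log h0 hle
    rw [Real.negMulLog, neg_mul]
    nlinarith [hp i hi]

/-- Decomposition of a measure over the fibers of a map with finite range. -/
lemma toReal_measure_eq_sum' {T' : Type*} (ν : Measure Ω) [IsFiniteMeasure ν]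
    (Y : Ω → T') (F : Finset T') (hF : Set.range Y ⊆ ↑F) (A : Set Ω)
    (hA : ∀ t, MeasurableSet (A ∩ Y ⁻¹' {t})) :
    (ν A).toReal = ∑ t ∈ F, (ν (A ∩ Y ⁻¹' {t})).toReal := by
  have hU : A = ⋃ t ∈ F, A ∩ Y ⁻¹' {t} := by
    ext ω
    simp only [Set.mem_iUnion, Set.mem_inter_iff, Set.mem_preimage, Set.mem_singleton_iff]
    exact ⟨fun h => ⟨Y ω, hF ⟨ω, rfl⟩, h, rfl⟩, fun ⟨t, _, h, _⟩ => h⟩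
  have hdisj : (↑F : Set T').PairwiseDisjoint (fun t => A ∩ Y ⁻¹' {t}) := by
    intro t _ t' _ htt'
    refine Set.disjoint_left.2 fun ω h1 h2 => htt' ?_
    rw [← h1.2, ← h2.2]
  conv_lhs => rw [hU]
  rw [measure_biUnion_finset hdisj (fun t _ => hA t)]
  exact ENNReal.toReal_sum fun t _ => measure_ne_top ν _

lemma entropy_eq_sum' {S : Type*} (ν : Measure Ω) (X : Ω → S) (F : Finset S)
    (hF : Set.range X ⊆ ↑F) :
    entropy ν X = ∑ s ∈ F, Real.negMulLog ((ν (X ⁻¹' {s})).toReal) := by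
  apply tsum_eq_sum
  intro s hs
  have h : X ⁻¹' {s} = ∅ := by
    ext ω
    simp only [Set.mem_preimage, Set.mem_singleton_iff, Set.mem_empty_iff_false, iff_false]
    exact fun he => hs (by simpa [he] using hF ⟨ω, rfl⟩)
  simp [h]

lemma condEntropy_eq_sum' {S T' : Type*} (ν : Measure Ω) (X : Ω → S) (Y : Ω → T')
    (F : Finset T') (hF : Set.range Y ⊆ ↑F) :
    condEntropy ν X Y = ∑ t ∈ F, ((ν (Y ⁻¹' {t})).toReal) * entropy (ν[|Y ⁻¹' {t}]) X := by
  apply tsum_eq_sum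
  intro t ht
  have h : Y ⁻¹' {t} = ∅ := by
    ext ω
    simp only [Set.mem_preimage, Set.mem_singleton_iff, Set.mem_empty_iff_false, iff_false]
    exact fun he => ht (by simpa [he] using hF ⟨ω, rfl⟩)
  simp [h]

lemma cond_toReal' (ν : Measure Ω) [IsFiniteMeasure ν] {E : Set Ω} (hE : MeasurableSet E)
    (A : Set Ω) :
    ((ν[|E]) A).toReal = (ν (E ∩ A)).toReal / (ν E).toReal := by
  rw [cond_apply hE, ENNReal.toReal_mul, ENNReal.toReal_inv, inv_mul_eq_div]

lemma weight_mul_cond' (ν : Measure Ω) [IsFiniteMeasure ν] {E : Set Ω}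
    (hE : MeasurableSet E) (A : Set Ω) :
    (ν E).toReal * ((ν[|E]) A).toReal = (ν (E ∩ A)).toReal := by
  rw [cond_toReal' ν hE]
  rcases eq_or_ne ((ν E).toReal) 0 with h0 | h0
  · have hz : ν E = 0 := by
      rcases (ENNReal.toReal_eq_zero_iff _).1 h0 with h | h
      · exact h
      · exact absurd h (measure_ne_top ν _)
    rw [h0, measure_mono_null Set.inter_subset_left hz]
    simp
  · field_simp

lemma mul_negMulLog_div' {b m : ℝ} (hb : 0 < b) (hm : 0 ≤ m) :
    b * Real.negMulLog (m / b) = Real.negMulLog m + m * Real.log b := by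
  rcases eq_or_lt_of_le hm with h | h
  · simp [← h]
  · rw [Real.negMulLog, Real.negMulLog, Real.log_div h.ne' hb.ne']
    field_simp
    ring

/-- Chain rule: `H(X, Y) = H(Y) + H(X ∣ Y)`. -/
lemma chain_rule' {S T' : Type*} [MeasurableSpace S] [MeasurableSingletonClass S]
    [MeasurableSpace T'] [MeasurableSingletonClass T']
    (ν : Measure Ω) [IsProbabilityMeasure ν]
    (X : Ω → S) (Y : Ω → T') (hX : Measurable X) (hY : Measurable Y)
    (hXf : (Set.range X).Finite) (hYf : (Set.range Y).Finite) :
    entropy ν (fun ω => (X ω, Y ω)) = entropy ν Y + condEntropy ν X Y := by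
  classical
  set FX := hXf.toFinset with hFXdef
  set FY := hYf.toFinset with hFYdef
  have hFX : Set.range X ⊆ ↑FX := by simp [hFXdef]
  have hFY : Set.range Y ⊆ ↑FY := by simp [hFYdef]
  have hpair : Set.range (fun ω => (X ω, Y ω)) ⊆ ↑(FX ×ˢ FY) := by
    rintro _ ⟨ω, rfl⟩
    simp only [Finset.coe_product, Set.mem_prod]
    exact ⟨hFX ⟨ω, rfl⟩, hFY ⟨ω, rfl⟩⟩
  rw [entropy_eq_sum' ν _ _ hpair, entropy_eq_sum' ν Y FY hFY,
      condEntropy_eq_sum' ν X Y FY hFY, Finset.sum_product_right, ← Finset.sum_add_distrib]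
  refine Finset.sum_congr rfl fun t ht => ?_
  have hpre : ∀ s : S, (fun ω => (X ω, Y ω)) ⁻¹' {(s, t)} = Y ⁻¹' {t} ∩ X ⁻¹' {s} := by
    intro s; ext ω
    simp only [Set.mem_preimage, Set.mem_singleton_iff, Prod.ext_iff, Set.mem_inter_iff]
    tauto
  simp only [hpre]
  have hmt : MeasurableSet (Y ⁻¹' {t}) := hY (measurableSet_singleton t)
  have hent : entropy (ν[|Y ⁻¹' {t}]) X = ∑ s ∈ FX,
      Real.negMulLog ((ν (Y ⁻¹' {t} ∩ X ⁻¹' {s})).toReal / (ν (Y ⁻¹' {t})).toReal) := by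
    rw [entropy_eq_sum' _ X FX hFX]
    exact Finset.sum_congr rfl fun s _ => by rw [cond_toReal' ν hmt]
  have hb : (ν (Y ⁻¹' {t})).toReal = ∑ s ∈ FX, (ν (Y ⁻¹' {t} ∩ X ⁻¹' {s})).toReal :=
    toReal_measure_eq_sum' ν X FX hFX _
      (fun s => hmt.inter (hX (measurableSet_singleton s)))
  rcases eq_or_ne ((ν (Y ⁻¹' {t})).toReal) 0 with h0 | h0
  · have hz : ν (Y ⁻¹' {t}) = 0 := by
      rcases (ENNReal.toReal_eq_zero_iff _).1 h0 with h | h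
      · exact h
      · exact absurd h (measure_ne_top ν _)
    have hm : ∀ s ∈ FX, Real.negMulLog ((ν (Y ⁻¹' {t} ∩ X ⁻¹' {s})).toReal) = 0 := by
      intro s _
      rw [measure_mono_null Set.inter_subset_left hz]
      simp
    rw [Finset.sum_eq_zero hm, h0, zero_mul, Real.negMulLog_zero, add_zero]
  · have hbpos : 0 < (ν (Y ⁻¹' {t})).toReal := ENNReal.toReal_nonneg.lt_of_ne' h0
    rw [hent, Finset.mul_sum]
    have hkey : ∀ s ∈ FX, (ν (Y ⁻¹' {t})).toReal *
        Real.negMulLog ((ν (Y ⁻¹' {t} ∩ X ⁻¹' {s})).toReal / (ν (Y ⁻¹' {t})).toReal)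
        = Real.negMulLog ((ν (Y ⁻¹' {t} ∩ X ⁻¹' {s})).toReal)
          + (ν (Y ⁻¹' {t} ∩ X ⁻¹' {s})).toReal * Real.log ((ν (Y ⁻¹' {t})).toReal) :=
      fun s _ => mul_negMulLog_div' hbpos ENNReal.toReal_nonneg
    rw [Finset.sum_congr rfl hkey, Finset.sum_add_distrib, ← Finset.sum_mul, ← hb,
      Real.negMulLog]
    ring

/-- Conditioning reduces entropy: `H(X ∣ Y) ≤ H(X)`. -/
lemma condEntropy_le_entropy' {S T' : Type*} [MeasurableSpace S] [MeasurableSingletonClass S]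
    [MeasurableSpace T'] [MeasurableSingletonClass T']
    (ν : Measure Ω) [IsProbabilityMeasure ν]
    (X : Ω → S) (Y : Ω → T') (hX : Measurable X) (hY : Measurable Y)
    (hXf : (Set.range X).Finite) (hYf : (Set.range Y).Finite) :
    condEntropy ν X Y ≤ entropy ν X := by
  classical
  set FX := hXf.toFinset with hFXdef
  set FY := hYf.toFinset with hFYdef
  have hFX : Set.range X ⊆ ↑FX := by simp [hFXdef]
  have hFY : Set.range Y ⊆ ↑FY := by simp [hFYdef]
  rw [condEntropy_eq_sum' ν X Y FY hFY, entropy_eq_sum' ν X FX hFX]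
  have hrw : ∀ t ∈ FY, (ν (Y ⁻¹' {t})).toReal * entropy (ν[|Y ⁻¹' {t}]) X
      = ∑ s ∈ FX, (ν (Y ⁻¹' {t})).toReal *
          Real.negMulLog (((ν[|Y ⁻¹' {t}]) (X ⁻¹' {s})).toReal) := by
    intro t _; rw [entropy_eq_sum' _ X FX hFX, Finset.mul_sum]
  rw [Finset.sum_congr rfl hrw, Finset.sum_comm]
  refine Finset.sum_le_sum fun s _ => ?_
  have hw1 : ∑ t ∈ FY, (ν (Y ⁻¹' {t})).toReal = 1 := by
    have h := toReal_measure_eq_sum' ν Y FY hFY Set.univ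
      (fun t => MeasurableSet.univ.inter (hY (measurableSet_singleton t)))
    simpa using h.symm
  have hj := Real.concaveOn_negMulLog.le_map_sum (t := FY)
    (w := fun t => (ν (Y ⁻¹' {t})).toReal)
    (p := fun t => ((ν[|Y ⁻¹' {t}]) (X ⁻¹' {s})).toReal)
    (fun t _ => ENNReal.toReal_nonneg) hw1
    (fun t _ => Set.mem_Ici.2 ENNReal.toReal_nonneg)
  simp only [smul_eq_mul] at hj
  have hsum : ∑ t ∈ FY, (ν (Y ⁻¹' {t})).toReal * ((ν[|Y ⁻¹' {t}]) (X ⁻¹' {s})).toReal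
      = (ν (X ⁻¹' {s})).toReal := by
    have h := toReal_measure_eq_sum' ν Y FY hFY (X ⁻¹' {s})
      (fun t => (hX (measurableSet_singleton s)).inter (hY (measurableSet_singleton t)))
    rw [h]
    exact Finset.sum_congr rfl fun t _ => by
      rw [weight_mul_cond' ν (hY (measurableSet_singleton t)), Set.inter_comm]
  rw [hsum] at hj
  exact hj

/-- Data processing: `H(g(X)) ≤ H(X)`. -/
lemma entropy_comp_le' {S U : Type*} [MeasurableSpace S] [MeasurableSingletonClass S]
    (ν : Measure Ω) [IsProbabilityMeasure ν]
    (X : Ω → S) (hX : Measurable X) (hXf : (Set.range X).Finite) (g : S → U) :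
    entropy ν (fun ω => g (X ω)) ≤ entropy ν X := by
  classical
  set FX := hXf.toFinset with hFXdef
  have hFX : Set.range X ⊆ ↑FX := by simp [hFXdef]
  set FU := FX.image g with hFUdef
  have hFU : Set.range (fun ω => g (X ω)) ⊆ ↑FU := by
    rintro _ ⟨ω, rfl⟩
    exact Finset.mem_coe.2 (Finset.mem_image_of_mem g (hFX ⟨ω, rfl⟩))
  rw [entropy_eq_sum' ν _ FU hFU, entropy_eq_sum' ν X FX hFX,
    ← Finset.sum_fiberwise_of_maps_to (g := g) (fun s hs => Finset.mem_image_of_mem g hs)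
      (fun s => Real.negMulLog ((ν (X ⁻¹' {s})).toReal))]
  refine Finset.sum_le_sum fun u hu => ?_
  have hAs : ∀ s : S, ((fun ω => g (X ω)) ⁻¹' {u}) ∩ X ⁻¹' {s}
      = if g s = u then X ⁻¹' {s} else ∅ := by
    intro s
    split_ifs with h
    · ext ω
      simp only [Set.mem_inter_iff, Set.mem_preimage, Set.mem_singleton_iff]
      exact ⟨fun h2 => h2.2, fun h2 => ⟨by rw [h2, h], h2⟩⟩
    · ext ω
      simp only [Set.mem_inter_iff, Set.mem_preimage, Set.mem_singleton_iff,
        Set.mem_empty_iff_false, iff_false, not_and]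
      intro h1 h2
      exact h (by rw [← h2, h1])
  have hpre : (ν ((fun ω => g (X ω)) ⁻¹' {u})).toReal
      = ∑ s ∈ FX.filter (fun s => g s = u), (ν (X ⁻¹' {s})).toReal := by
    have h1 := toReal_measure_eq_sum' ν X FX hFX ((fun ω => g (X ω)) ⁻¹' {u})
      (fun s => by
        rw [hAs s]
        split_ifs
        · exact hX (measurableSet_singleton s)
        · exact MeasurableSet.empty)
    rw [h1, Finset.sum_filter]
    refine Finset.sum_congr rfl fun s _ => ?_
    rw [hAs s]
    split_ifs <;> simp
  rw [hpre]
  exact negMulLog_sum_le' _ _ (fun _ _ => ENNReal.toReal_nonneg)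

/-- Conditional data processing: `H(g(X) ∣ Y) ≤ H(X ∣ Y)`. -/
lemma condEntropy_comp_le' {S U T' : Type*} [MeasurableSpace S] [MeasurableSingletonClass S]
    [MeasurableSpace T'] [MeasurableSingletonClass T']
    (ν : Measure Ω) [IsProbabilityMeasure ν]
    (X : Ω → S) (Y : Ω → T') (hX : Measurable X)
    (hXf : (Set.range X).Finite) (hYf : (Set.range Y).Finite) (g : S → U) :
    condEntropy ν (fun ω => g (X ω)) Y ≤ condEntropy ν X Y := by
  classical
  have hFY : Set.range Y ⊆ ↑hYf.toFinset := by simp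
  rw [condEntropy_eq_sum' ν _ Y _ hFY, condEntropy_eq_sum' ν X Y _ hFY]
  refine Finset.sum_le_sum fun t _ => ?_
  rcases eq_or_ne (ν (Y ⁻¹' {t})) 0 with hz | hz
  · simp [hz]
  · have : IsProbabilityMeasure (ν[|Y ⁻¹' {t}]) := cond_isProbabilityMeasure hz
    exact mul_le_mul_of_nonneg_left (entropy_comp_le' _ X hX hXf g) ENNReal.toReal_nonneg

/-- Conditional subadditivity: `H((A,B) ∣ Y) ≤ H(A ∣ Y) + H(B ∣ Y)`. -/
lemma condEntropy_pair_le' {S S2 T' : Type*} [MeasurableSpace S] [MeasurableSingletonClass S]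
    [MeasurableSpace S2] [MeasurableSingletonClass S2]
    [MeasurableSpace T'] [MeasurableSingletonClass T']
    (ν : Measure Ω) [IsProbabilityMeasure ν]
    (A : Ω → S) (B : Ω → S2) (Y : Ω → T') (hA : Measurable A) (hB : Measurable B)
    (hAf : (Set.range A).Finite) (hBf : (Set.range B).Finite)
    (hYf : (Set.range Y).Finite) :
    condEntropy ν (fun ω => (A ω, B ω)) Y ≤ condEntropy ν A Y + condEntropy ν B Y := by
  classical
  have hFY : Set.range Y ⊆ ↑hYf.toFinset := by simp
  rw [condEntropy_eq_sum' ν _ Y _ hFY, condEntropy_eq_sum' ν A Y _ hFY,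
    condEntropy_eq_sum' ν B Y _ hFY, ← Finset.sum_add_distrib]
  refine Finset.sum_le_sum fun t _ => ?_
  rcases eq_or_ne (ν (Y ⁻¹' {t})) 0 with hz | hz
  · simp [hz]
  · have : IsProbabilityMeasure (ν[|Y ⁻¹' {t}]) := cond_isProbabilityMeasure hz
    rw [← mul_add]
    refine mul_le_mul_of_nonneg_left ?_ ENNReal.toReal_nonneg
    have h1 := chain_rule' (ν[|Y ⁻¹' {t}]) A B hA hB hAf hBf
    have h2 := condEntropy_le_entropy' (ν[|Y ⁻¹' {t}]) A B hA hB hAf hBf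
    linarith

/-- Conditioning on a pair refines conditioning: `H(X ∣ (W,Z)) ≤ H(X ∣ Z)`. -/
lemma condEntropy_pair_cond_le' {S 𝒲 𝒵 : Type*}
    [MeasurableSpace S] [MeasurableSingletonClass S]
    [MeasurableSpace 𝒲] [MeasurableSingletonClass 𝒲]
    [MeasurableSpace 𝒵] [MeasurableSingletonClass 𝒵]
    (ν : Measure Ω) [IsProbabilityMeasure ν]
    (X : Ω → S) (W : Ω → 𝒲) (Z : Ω → 𝒵) (hX : Measurable X) (hW : Measurable W)
    (hZ : Measurable Z) (hXf : (Set.range X).Finite) (hWf : (Set.range W).Finite)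
    (hZf : (Set.range Z).Finite) :
    condEntropy ν X (fun ω => (W ω, Z ω)) ≤ condEntropy ν X Z := by
  classical
  set FW := hWf.toFinset with hFWdef
  set FZ := hZf.toFinset with hFZdef
  have hFW : Set.range W ⊆ ↑FW := by simp [hFWdef]
  have hFZ : Set.range Z ⊆ ↑FZ := by simp [hFZdef]
  have hpairrange : Set.range (fun ω => (W ω, Z ω)) ⊆ ↑(FW ×ˢ FZ) := by
    rintro _ ⟨ω, rfl⟩
    simp only [Finset.coe_product, Set.mem_prod]
    exact ⟨hFW ⟨ω, rfl⟩, hFZ ⟨ω, rfl⟩⟩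
  rw [condEntropy_eq_sum' ν X _ _ hpairrange, condEntropy_eq_sum' ν X Z FZ hFZ,
    Finset.sum_product_right]
  refine Finset.sum_le_sum fun z _ => ?_
  have hmz : MeasurableSet (Z ⁻¹' {z}) := hZ (measurableSet_singleton z)
  have hpre : ∀ w : 𝒲, (fun ω => (W ω, Z ω)) ⁻¹' {(w, z)} = Z ⁻¹' {z} ∩ W ⁻¹' {w} := by
    intro w; ext ω
    simp only [Set.mem_preimage, Set.mem_singleton_iff, Prod.ext_iff, Set.mem_inter_iff]
    tauto
  simp only [hpre]
  rcases eq_or_ne (ν (Z ⁻¹' {z})) 0 with hz0 | hz0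
  · have hzero : ∀ w ∈ FW, (ν (Z ⁻¹' {z} ∩ W ⁻¹' {w})).toReal
        * entropy (ν[|Z ⁻¹' {z} ∩ W ⁻¹' {w}]) X = 0 := by
      intro w _
      rw [measure_mono_null Set.inter_subset_left hz0]
      simp
    rw [Finset.sum_eq_zero hzero, hz0]
    simp
  · have hprob : IsProbabilityMeasure (ν[|Z ⁻¹' {z}]) := cond_isProbabilityMeasure hz0
    have hcc : ∀ w : 𝒲, ν[|Z ⁻¹' {z} ∩ W ⁻¹' {w}] = (ν[|Z ⁻¹' {z}])[|W ⁻¹' {w}] :=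
      fun w => (cond_cond_eq_cond_inter' hmz (hW (measurableSet_singleton w))
        (measure_ne_top ν _)).symm
    have hwt : ∀ w : 𝒲, (ν (Z ⁻¹' {z} ∩ W ⁻¹' {w})).toReal
        = (ν (Z ⁻¹' {z})).toReal * (((ν[|Z ⁻¹' {z}]) (W ⁻¹' {w})).toReal) :=
      fun w => (weight_mul_cond' ν hmz _).symm
    calc ∑ w ∈ FW, (ν (Z ⁻¹' {z} ∩ W ⁻¹' {w})).toReal
            * entropy (ν[|Z ⁻¹' {z} ∩ W ⁻¹' {w}]) X
        = (ν (Z ⁻¹' {z})).toReal * ∑ w ∈ FW, ((ν[|Z ⁻¹' {z}]) (W ⁻¹' {w})).toReal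
            * entropy ((ν[|Z ⁻¹' {z}])[|W ⁻¹' {w}]) X := by
          rw [Finset.mul_sum]
          exact Finset.sum_congr rfl fun w _ => by rw [hwt w, hcc w]; ring
      _ = (ν (Z ⁻¹' {z})).toReal * condEntropy (ν[|Z ⁻¹' {z}]) X W := by
          rw [condEntropy_eq_sum' (ν[|Z ⁻¹' {z}]) X W FW hFW]
      _ ≤ (ν (Z ⁻¹' {z})).toReal * entropy (ν[|Z ⁻¹' {z}]) X :=
          mul_le_mul_of_nonneg_left
            (condEntropy_le_entropy' (ν[|Z ⁻¹' {z}]) X W hX hW hXf hWf)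
            ENNReal.toReal_nonneg

end AuxEntropyLemmas

/-- **Proposition 1 (abstract form).** For discrete random variables `R, Z, W, T`
(`T` real-valued) on a probability space and any `f : S → ℝ`, with `G = f(R) + T`:
`H(G ∣ W, Z) ≤ H(R) − I(Z ; R) + H(T ∣ W, Z)`. -/
theorem stmt_0 {Ω S 𝒲 𝒵 : Type*} [MeasurableSpace Ω]
    [MeasurableSpace S] [MeasurableSingletonClass S] [Finite S]
    [MeasurableSpace 𝒲] [MeasurableSingletonClass 𝒲] [Finite 𝒲]
    [MeasurableSpace 𝒵] [MeasurableSingletonClass 𝒵] [Finite 𝒵]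
    (μ : Measure Ω) [IsProbabilityMeasure μ]
    (R : Ω → S) (Z : Ω → 𝒵) (W : Ω → 𝒲) (T : Ω → ℝ)
    (hR : Measurable R) (hZ : Measurable Z) (hW : Measurable W) (hT : Measurable T)
    (hTfin : (Set.range T).Finite) (f : S → ℝ) :
    condEntropy μ (fun ω => f (R ω) + T ω) (fun ω => (W ω, Z ω)) ≤
      entropy μ R - mutualInfo μ Z R + condEntropy μ T (fun ω => (W ω, Z ω)) := by
  classical
  set Y := fun ω => (W ω, Z ω) with hYdef
  have hYm : Measurable Y := hW.prodMk hZ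
  have hYf : (Set.range Y).Finite := Set.toFinite _
  have hRf : (Set.range R).Finite := Set.toFinite _
  have hZf : (Set.range Z).Finite := Set.toFinite _
  have hWf : (Set.range W).Finite := Set.toFinite _
  have hfR : Measurable (fun ω => f (R ω)) := (measurable_of_countable f).comp hR
  have hfRf : (Set.range fun ω => f (R ω)).Finite := by
    refine (hRf.image f).subset ?_
    rintro _ ⟨ω, rfl⟩
    exact ⟨R ω, ⟨ω, rfl⟩, rfl⟩
  have hPm : Measurable (fun ω => (f (R ω), T ω)) := hfR.prodMk hT
  have hPf : (Set.range fun ω => (f (R ω), T ω)).Finite := by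
    refine (hfRf.prod hTfin).subset ?_
    rintro _ ⟨ω, rfl⟩
    exact ⟨⟨ω, rfl⟩, ⟨ω, rfl⟩⟩
  -- Step 1: H(G ∣ Y) ≤ H((f∘R, T) ∣ Y)  (G is a function of the pair)
  have step1 : condEntropy μ (fun ω => f (R ω) + T ω) Y
      ≤ condEntropy μ (fun ω => (f (R ω), T ω)) Y :=
    condEntropy_comp_le' μ (fun ω => (f (R ω), T ω)) Y hPm hPf hYf
      (fun p => p.1 + p.2)
  -- Step 2: subadditivity
  have step2 : condEntropy μ (fun ω => (f (R ω), T ω)) Y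
      ≤ condEntropy μ (fun ω => f (R ω)) Y + condEntropy μ T Y :=
    condEntropy_pair_le' μ (fun ω => f (R ω)) T Y hfR hT hfRf hTfin hYf
  -- Step 3: data processing
  have step3 : condEntropy μ (fun ω => f (R ω)) Y ≤ condEntropy μ R Y :=
    condEntropy_comp_le' μ R Y hR hRf hYf f
  -- Step 4: conditioning on (W, Z) refines conditioning on Z
  have step4 : condEntropy μ R Y ≤ condEntropy μ R Z :=
    condEntropy_pair_cond_le' μ R W Z hR hW hZ hRf hWf hZf
  -- Step 5: H(R ∣ Z) = H(R) − I(Z ; R)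
  have hc1 := chain_rule' μ R Z hR hZ hRf hZf
  have hc2 := chain_rule' μ Z R hZ hR hZf hRf
  have hswap : entropy μ (fun ω => (R ω, Z ω)) = entropy μ (fun ω => (Z ω, R ω)) := by
    have h1 : entropy μ (fun ω => (Z ω, R ω)) ≤ entropy μ (fun ω => (R ω, Z ω)) :=
      entropy_comp_le' μ (fun ω => (R ω, Z ω)) (hR.prodMk hZ)
        ((hRf.prod hZf).subset (by rintro _ ⟨ω, rfl⟩; exact ⟨⟨ω, rfl⟩, ⟨ω, rfl⟩⟩))
        Prod.swap
    have h2 : entropy μ (fun ω => (R ω, Z ω)) ≤ entropy μ (fun ω => (Z ω, R ω)) :=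
      entropy_comp_le' μ (fun ω => (Z ω, R ω)) (hZ.prodMk hR)
        ((hZf.prod hRf).subset (by rintro _ ⟨ω, rfl⟩; exact ⟨⟨ω, rfl⟩, ⟨ω, rfl⟩⟩))
        Prod.swap
    exact le_antisymm h2 h1
  have step5 : condEntropy μ R Z = entropy μ R - mutualInfo μ Z R := by
    rw [mutualInfo]
    linarith
  linarith
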